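/- For 0 < q < p ≤ 1, natural number n, and x ∈ [0,1], the first central moment of the (p,q)-Meyer-König and Zeller operator vanishes: M_{n,p,q}((t - x); x) = 0. -/
import Mathlib

open Filter Topology

noncomputable def pqInt (p q : ℝ) (n : ℕ) : ℝ := (p ^ n - q ^ n) / (p - q)

noncomputable def pqFact (p q : ℝ) (n : ℕ) : ℝ :=
  ∏ j ∈ Finset.range n, pqInt p q (j + 1)

noncomputable def pqBinom (p q : ℝ) (n k : ℕ) : ℝ :=
  pqFact p q n / (pqFact p q k * pqFact p q (n - k))

noncomputable def mkz (p q : ℝ) (n : ℕ) (f : ℝ → ℝ) (x : ℝ) : ℝ :=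
  if x = 1 then f 1 else
    (p ^ (n * (n + 1) / 2))⁻¹ *
      ∑' k : ℕ, pqBinom p q (n + k) k * x ^ k * (p ^ (k * n))⁻¹ *
        (∏ s ∈ Finset.range (n + 1), (p ^ s - q ^ s * x)) *
        f (p ^ n * pqInt p q k / pqInt p q (n + k))

noncomputable def supNorm (g : ℝ → ℝ) : ℝ :=
  sSup ((fun x => |g x|) '' Set.Icc (0 : ℝ) 1)

noncomputable def modCont (f : ℝ → ℝ) (δ : ℝ) : ℝ :=
  sSup ((fun p : ℝ × ℝ => |f p.1 - f p.2|) ''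
    {p : ℝ × ℝ | p.1 ∈ Set.Icc (0 : ℝ) 1 ∧ p.2 ∈ Set.Icc (0 : ℝ) 1 ∧ |p.1 - p.2| ≤ δ})

def StatLim (x : ℕ → ℝ) (L : ℝ) : Prop :=
  ∀ ε > 0, Filter.Tendsto
    (fun n => (((Finset.range (n + 1)).filter (fun k => ε ≤ |x k - L|)).card : ℝ) / (n : ℝ))
    Filter.atTop (nhds 0)

section Aux

variable {p q : ℝ}

lemma pqInt_pos (hq : 0 < q) (hqp : q < p) {m : ℕ} (hm : m ≠ 0) : 0 < pqInt p q m := by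
  have h1 : q ^ m < p ^ m := pow_lt_pow_left₀ hqp hq.le hm
  exact div_pos (sub_pos.mpr h1) (sub_pos.mpr hqp)

lemma pqFact_pos (hq : 0 < q) (hqp : q < p) (m : ℕ) : 0 < pqFact p q m := by
  refine Finset.prod_pos fun j _ => pqInt_pos hq hqp (Nat.succ_ne_zero j)

lemma pqFact_succ (m : ℕ) : pqFact p q (m + 1) = pqFact p q m * pqInt p q (m + 1) :=
  Finset.prod_range_succ _ _

lemma pqBinom_pos (hq : 0 < q) (hqp : q < p) (m k : ℕ) : 0 < pqBinom p q m k :=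
  div_pos (pqFact_pos hq hqp _) (mul_pos (pqFact_pos hq hqp _) (pqFact_pos hq hqp _))

lemma pqBinom_succ (hq : 0 < q) (hqp : q < p) (n k : ℕ) :
    pqBinom p q (n + (k + 1)) (k + 1) =
      pqBinom p q (n + k) k * (pqInt p q (n + k + 1) / pqInt p q (k + 1)) := by
  have h1 : n + (k + 1) - (k + 1) = n := by omega
  have h2 : n + k - k = n := by omega
  have h3 : n + (k + 1) = (n + k) + 1 := by omega
  rw [pqBinom, pqBinom, h1, h2, h3, pqFact_succ, pqFact_succ, div_mul_div_comm]
  congr 1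
  ring

lemma ratio_aux (hq : 0 < q) (hqp : q < p) (n k : ℕ) :
    pqInt p q (n + k + 1) / pqInt p q (k + 1) / p ^ n =
      (1 - (q / p) ^ (n + k + 1)) / (1 - (q / p) ^ (k + 1)) := by
  have hp0 : 0 < p := hq.trans hqp
  have hpq : p - q ≠ 0 := (sub_pos.mpr hqp).ne'
  have h1 : p ^ (k + 1) - q ^ (k + 1) ≠ 0 :=
    (sub_pos.mpr (pow_lt_pow_left₀ hqp hq.le (Nat.succ_ne_zero k))).ne'
  have h2 : (p : ℝ) ^ (k + 1) ≠ 0 := (pow_pos hp0 _).ne'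
  have h3 : (p : ℝ) ^ (n + k + 1) ≠ 0 := (pow_pos hp0 _).ne'
  have h4 : (p : ℝ) ^ n ≠ 0 := (pow_pos hp0 _).ne'
  have h5 : 1 - q ^ (k + 1) / p ^ (k + 1) ≠ 0 := by
    have : q ^ (k + 1) / p ^ (k + 1) < 1 := by
      rw [div_lt_one (pow_pos hp0 _)]
      exact pow_lt_pow_left₀ hqp hq.le (Nat.succ_ne_zero k)
    linarith
  rw [pqInt, pqInt, div_pow, div_pow]
  field_simp
  ring

end Aux

theorem mkz_central_first (p q : ℝ) (hq : 0 < q) (hqp : q < p) (hp : p ≤ 1)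
    (n : ℕ) (x : ℝ) (hx : x ∈ Set.Icc (0 : ℝ) 1) :
    mkz p q n (fun t => t - x) x = 0 := by
  have hp0 : 0 < p := hq.trans hqp
  by_cases hx1 : x = 1
  · simp [mkz, hx1]
  rw [mkz, if_neg hx1]
  have hxlt : x < 1 := lt_of_le_of_ne hx.2 hx1
  by_cases hx0 : x = 0
  · subst hx0
    have hz : ∀ k : ℕ, pqBinom p q (n + k) k * (0:ℝ) ^ k * (p ^ (k * n))⁻¹ *
        (∏ s ∈ Finset.range (n + 1), (p ^ s - q ^ s * 0)) *
        ((fun t => t - (0:ℝ)) (p ^ n * pqInt p q k / pqInt p q (n + k))) = 0 := by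
      intro k
      cases k with
      | zero => simp [pqInt]
      | succ m => simp
    rw [tsum_congr hz]
    simp
  have hx0' : 0 < x := lt_of_le_of_ne hx.1 (Ne.symm hx0)
  -- the product factor is positive
  set P : ℝ := ∏ s ∈ Finset.range (n + 1), (p ^ s - q ^ s * x) with hP
  have hPpos : 0 < P := by
    refine Finset.prod_pos fun s _ => ?_
    have h1 : q ^ s * x < q ^ s := by
      nlinarith [pow_pos hq s]
    have h2 : q ^ s ≤ p ^ s := pow_le_pow_left₀ hq.le hqp.le s
    linarith
  set u : ℕ → ℝ := fun k => pqBinom p q (n + k) k * x ^ k * (p ^ (k * n))⁻¹ * P with hu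
  set v : ℕ → ℝ := fun k => u k * (p ^ n * pqInt p q k / pqInt p q (n + k)) with hv
  have hupos : ∀ k, 0 < u k := fun k =>
    mul_pos (mul_pos (mul_pos (pqBinom_pos hq hqp _ _) (pow_pos hx0' k))
      (inv_pos.mpr (pow_pos hp0 _))) hPpos
  have hv0 : v 0 = 0 := by simp [hv, pqInt]
  have hvs : ∀ k, v (k + 1) = x * u k := by
    intro k
    have hIk : pqInt p q (k + 1) ≠ 0 := (pqInt_pos hq hqp (Nat.succ_ne_zero k)).ne'
    have hInk : pqInt p q (n + k + 1) ≠ 0 :=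
      (pqInt_pos hq hqp (by omega : n + k + 1 ≠ 0)).ne'
    have hnk : n + (k + 1) = n + k + 1 := by omega
    have hkn : (k + 1) * n = k * n + n := by ring
    simp only [hv, hu]
    rw [pqBinom_succ hq hqp, hnk, hkn, pow_add]
    have hpkn : (p : ℝ) ^ (k * n) ≠ 0 := (pow_pos hp0 _).ne'
    have hpn : (p : ℝ) ^ n ≠ 0 := (pow_pos hp0 _).ne'
    field_simp
    ring
  -- summability of u via ratio test
  have hSu : Summable u := by
    apply summable_of_ratio_test_tendsto_lt_one hxlt
      (Filter.Eventually.of_forall fun k => (hupos k).ne')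
    have hratio : ∀ k : ℕ, ‖u (k + 1)‖ / ‖u k‖ =
        x * ((1 - (q / p) ^ (n + k + 1)) / (1 - (q / p) ^ (k + 1))) := by
      intro k
      rw [Real.norm_eq_abs, Real.norm_eq_abs, abs_of_pos (hupos _), abs_of_pos (hupos _)]
      have hIk : pqInt p q (k + 1) ≠ 0 := (pqInt_pos hq hqp (Nat.succ_ne_zero k)).ne'
      have hInk : pqInt p q (n + k + 1) ≠ 0 :=
        (pqInt_pos hq hqp (by omega : n + k + 1 ≠ 0)).ne'
      have hnk : n + (k + 1) = n + k + 1 := by omega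
      have hkn : (k + 1) * n = k * n + n := by ring
      simp only [hu]
      rw [pqBinom_succ hq hqp, hkn, pow_add, ← ratio_aux hq hqp n k]
      have hB : pqBinom p q (n + k) k ≠ 0 := (pqBinom_pos hq hqp _ _).ne'
      have hxk : (x : ℝ) ^ k ≠ 0 := (pow_pos hx0' k).ne'
      have hpkn : (p : ℝ) ^ (k * n) ≠ 0 := (pow_pos hp0 _).ne'
      have hpn : (p : ℝ) ^ n ≠ 0 := (pow_pos hp0 _).ne'
      field_simp
      ring
    rw [show (x : ℝ) = x * ((1 - 0) / (1 - 0)) by norm_num]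
    refine Filter.Tendsto.congr (fun k => (hratio k).symm) ?_
    have ht0 : 0 ≤ q / p := le_of_lt (div_pos hq hp0)
    have ht1 : q / p < 1 := (div_lt_one hp0).mpr hqp
    have htk : Filter.Tendsto (fun k : ℕ => (q / p) ^ k) atTop (𝓝 0) :=
      tendsto_pow_atTop_nhds_zero_of_lt_one ht0 ht1
    have h1 : Filter.Tendsto (fun k : ℕ => (q / p) ^ (n + k + 1)) atTop (𝓝 0) := by
      have : (fun k : ℕ => (q / p) ^ (n + k + 1)) =
          fun k : ℕ => (q / p) ^ (n + 1) * (q / p) ^ k := by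
        funext k
        rw [← pow_add]
        ring_nf
      rw [this, show (0:ℝ) = (q / p) ^ (n + 1) * 0 by ring]
      exact htk.const_mul _
    have h2 : Filter.Tendsto (fun k : ℕ => (q / p) ^ (k + 1)) atTop (𝓝 0) := by
      have : (fun k : ℕ => (q / p) ^ (k + 1)) = fun k : ℕ => (q / p) * (q / p) ^ k := by
        funext k; rw [pow_succ]; ring
      rw [this, show (0:ℝ) = (q / p) * 0 by ring]
      exact htk.const_mul _
    exact Filter.Tendsto.const_mul x
      (((tendsto_const_nhds.sub h1).div (tendsto_const_nhds.sub h2)) (by norm_num))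
  have hSv : Summable v := by
    rw [← summable_nat_add_iff 1]
    have : (fun k : ℕ => v (k + 1)) = fun k : ℕ => x * u k := funext hvs
    rw [this]
    exact hSu.mul_left x
  have hterm : ∀ k : ℕ, pqBinom p q (n + k) k * x ^ k * (p ^ (k * n))⁻¹ * P *
      ((fun t => t - x) (p ^ n * pqInt p q k / pqInt p q (n + k))) = v k - x * u k := by
    intro k
    simp only [hv, hu]
    ring
  rw [tsum_congr hterm, Summable.tsum_sub hSv (hSu.mul_left x), Summable.tsum_eq_zero_add hSv, hv0]
  have : (fun k : ℕ => v (k + 1)) = fun k : ℕ => x * u k := funext hvs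
  rw [this, tsum_mul_left]
  ring
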